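/- arXiv:2412.07611 — 4 statements merged into one kernel-verified Lean document; each statement's English description precedes it below -/
import Mathlib

section
/- Let λ : ℝ → ℝ be twice differentiable, let Λ : ℝ → ℝ be differentiable with Λ′ = λ, fix δ ∈ {0,1}, reals h₀, h*, φ₀, φ*, and constants M > 0, c₂ > 0. Let u ∈ [0,1] and set ψ = φ₀ + u·φ*. Assume 0 < h₀ + u·h* ≤ M, λ(ψ) > 0, λ(ψ)·λ″(ψ) ≤ λ′(ψ)² (log-concavity of λ at ψ), and λ′(ψ) ≥ c₂. Then the function ω(u) = δ·log(h₀ + u·h*) + δ·log λ(φ₀ + u·φ*) − Λ(φ₀ + u·φ*) satisfies ω″(u) ≤ −( δ·h*²/M² + c₂·φ*² ). -/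
/-- Upper curvature bound (display (A2)) in the proof of Lemma 2 of
"Deep partially linear transformation model for right-censored survival data". -/
theorem second_deriv_loglik_upper_bound
    (lam Lam : ℝ → ℝ)
    (hlam1 : Differentiable ℝ lam)
    (hlam2 : Differentiable ℝ (deriv lam))
    (hLam : ∀ x, HasDerivAt Lam (lam x) x)
    (δ : ℝ) (hδ : δ = 0 ∨ δ = 1)
    (h₀ hs φ₀ φs M c₂ : ℝ) (hM : 0 < M) (hc₂ : 0 < c₂)
    (u : ℝ) (hu : u ∈ Set.Icc (0 : ℝ) 1)
    (hpos : 0 < h₀ + u * hs) (hle : h₀ + u * hs ≤ M)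
    (hlam_pos : 0 < lam (φ₀ + u * φs))
    (hlogconc : lam (φ₀ + u * φs) * deriv (deriv lam) (φ₀ + u * φs)
        ≤ (deriv lam (φ₀ + u * φs)) ^ 2)
    (hderiv_lb : c₂ ≤ deriv lam (φ₀ + u * φs))
    (ω : ℝ → ℝ)
    (hω : ∀ v, ω v = δ * Real.log (h₀ + v * hs)
        + δ * Real.log (lam (φ₀ + v * φs)) - Lam (φ₀ + v * φs)) :
    deriv (deriv ω) u ≤ -(δ * hs ^ 2 / M ^ 2 + c₂ * φs ^ 2) := by
  set ψ := fun v : ℝ => φ₀ + v * φs with hψdef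
  set Hf := fun v : ℝ => h₀ + v * hs with hHdef
  have hψd : ∀ v : ℝ, HasDerivAt ψ φs v := fun v => by
    simpa [hψdef] using ((hasDerivAt_id v).mul_const φs).const_add φ₀
  have hHd : ∀ v : ℝ, HasDerivAt Hf hs v := fun v => by
    simpa [hHdef] using ((hasDerivAt_id v).mul_const hs).const_add h₀
  -- the open set where everything is positive
  set S : Set ℝ := {v | 0 < Hf v ∧ 0 < lam (ψ v)} with hSdef
  have hSopen : IsOpen S := by
    have h1 : Continuous Hf := by continuity
    have h2 : Continuous fun v => lam (ψ v) := hlam1.continuous.comp (by continuity)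
    exact (isOpen_lt continuous_const h1).inter (isOpen_lt continuous_const h2)
  have huS : u ∈ S := ⟨hpos, hlam_pos⟩
  -- first derivative formula
  set F : ℝ → ℝ := fun v =>
    δ * (hs / Hf v) + δ * (deriv lam (ψ v) * φs / lam (ψ v)) - lam (ψ v) * φs with hFdef
  have hωd : ∀ v ∈ S, HasDerivAt ω (F v) v := by
    intro v hv
    have hωfun : ω = fun v => δ * Real.log (Hf v) + δ * Real.log (lam (ψ v)) - Lam (ψ v) :=
      funext hω
    rw [hωfun]
    have h1 : HasDerivAt (fun v => Real.log (Hf v)) (hs / Hf v) v :=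
      (hHd v).log hv.1.ne'
    have hD : HasDerivAt (fun v => lam (ψ v)) (deriv lam (ψ v) * φs) v :=
      ((hlam1 (ψ v)).hasDerivAt).comp v (hψd v)
    have h2 : HasDerivAt (fun v => Real.log (lam (ψ v)))
        (deriv lam (ψ v) * φs / lam (ψ v)) v := hD.log hv.2.ne'
    have h3 : HasDerivAt (fun v => Lam (ψ v)) (lam (ψ v) * φs) v :=
      (hLam (ψ v)).comp v (hψd v)
    exact ((h1.const_mul δ).add (h2.const_mul δ)).sub h3
  -- deriv ω agrees with F near u
  have hEq : deriv ω =ᶠ[nhds u] F := by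
    filter_upwards [hSopen.mem_nhds huS] with v hv using (hωd v hv).deriv
  have hderiv2 : deriv (deriv ω) u = deriv F u := hEq.deriv_eq
  -- compute deriv F u
  set a := Hf u with ha
  set L := lam (ψ u) with hL
  set L' := deriv lam (ψ u) with hL'
  set L'' := deriv (deriv lam) (ψ u) with hL''
  have hFd : HasDerivAt F
      (δ * ((0 * a - hs * hs) / a ^ 2)
        + δ * ((L'' * φs * φs * L - L' * φs * (L' * φs)) / L ^ 2)
        - L' * φs * φs) u := by
    have h1 : HasDerivAt (fun v => hs / Hf v) ((0 * a - hs * hs) / a ^ 2) u :=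
      (hasDerivAt_const u hs).div (hHd u) hpos.ne'
    have hN : HasDerivAt (fun v => deriv lam (ψ v)) (L'' * φs) u :=
      ((hlam2 (ψ u)).hasDerivAt).comp u (hψd u)
    have hD : HasDerivAt (fun v => lam (ψ v)) (L' * φs) u :=
      ((hlam1 (ψ u)).hasDerivAt).comp u (hψd u)
    have h2 : HasDerivAt (fun v => deriv lam (ψ v) * φs / lam (ψ v))
        ((L'' * φs * φs * L - L' * φs * (L' * φs)) / L ^ 2) u :=
      (hN.mul_const φs).div hD hlam_pos.ne'
    exact ((h1.const_mul δ).add (h2.const_mul δ)).sub (hD.mul_const φs)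
  rw [hderiv2, hFd.deriv]
  -- now the inequality
  have ha2 : (0:ℝ) < a ^ 2 := by positivity
  have hM2 : (0:ℝ) < M ^ 2 := by positivity
  have hL2 : (0:ℝ) < L ^ 2 := by positivity
  have h1 : hs ^ 2 / M ^ 2 ≤ hs ^ 2 / a ^ 2 := by
    gcongr <;> nlinarith [sq_nonneg hs]
  have h2 : (L'' * φs * φs * L - L' * φs * (L' * φs)) / L ^ 2 ≤ 0 := by
    apply div_nonpos_of_nonpos_of_nonneg _ hL2.le
    nlinarith [sq_nonneg φs]
  have h3 : c₂ * φs ^ 2 ≤ L' * φs * φs := by nlinarith [sq_nonneg φs]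
  rcases hδ with h | h <;> subst h
  · simp only [zero_mul, zero_add, zero_div]
    nlinarith
  · simp only [one_mul]
    have : (0 * a - hs * hs) / a ^ 2 = -(hs ^ 2 / a ^ 2) := by ring
    rw [this]
    nlinarith
end

section
/- Let λ : ℝ → ℝ be twice differentiable, let Λ : ℝ → ℝ be differentiable with Λ′ = λ, fix δ ∈ {0,1}, reals h₀, h*, φ₀, φ*, and constants m > 0, A ≥ 0, B ≥ 0. Let u ∈ [0,1] and set ψ = φ₀ + u·φ*. Assume h₀ + u·h* ≥ m, λ(ψ) > 0, λ(ψ)·λ″(ψ) − λ′(ψ)² ≥ −A·λ(ψ)², and λ′(ψ) ≤ B. Then the function ω(u) = δ·log(h₀ + u·h*) + δ·log λ(φ₀ + u·φ*) − Λ(φ₀ + u·φ*) satisfies ω″(u) ≥ −( δ·h*²/m² + (A + B)·φ*² ). -/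
/-- Lower curvature bound (display (A3)) in the proof of Lemma 2 of
"Deep partially linear transformation model for right-censored survival data". -/
theorem second_deriv_loglik_lower_bound
    (lam Lam : ℝ → ℝ)
    (hlam1 : Differentiable ℝ lam)
    (hlam2 : Differentiable ℝ (deriv lam))
    (hLam : ∀ x, HasDerivAt Lam (lam x) x)
    (δ : ℝ) (hδ : δ = 0 ∨ δ = 1)
    (h₀ hs φ₀ φs m A B : ℝ) (hm : 0 < m) (hA : 0 ≤ A) (hB : 0 ≤ B)
    (u : ℝ) (hu : u ∈ Set.Icc (0 : ℝ) 1)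
    (hge : m ≤ h₀ + u * hs)
    (hlam_pos : 0 < lam (φ₀ + u * φs))
    (hlow : lam (φ₀ + u * φs) * deriv (deriv lam) (φ₀ + u * φs)
        - (deriv lam (φ₀ + u * φs)) ^ 2 ≥ -A * (lam (φ₀ + u * φs)) ^ 2)
    (hderiv_ub : deriv lam (φ₀ + u * φs) ≤ B)
    (ω : ℝ → ℝ)
    (hω : ∀ v, ω v = δ * Real.log (h₀ + v * hs)
        + δ * Real.log (lam (φ₀ + v * φs)) - Lam (φ₀ + v * φs)) :
    deriv (deriv ω) u ≥ -(δ * hs ^ 2 / m ^ 2 + (A + B) * φs ^ 2) := by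
  have hδ0 : 0 ≤ δ := by rcases hδ with h | h <;> simp [h]
  have hδ1 : δ ≤ 1 := by rcases hδ with h | h <;> simp [h]
  set Φ : ℝ → ℝ := fun v => φ₀ + v * φs with hΦdef
  set H : ℝ → ℝ := fun v => h₀ + v * hs with hHdef
  have hΦd : ∀ v : ℝ, HasDerivAt Φ φs v := fun v => by
    simpa [hΦdef] using ((hasDerivAt_id v).mul_const φs).const_add φ₀
  have hHd : ∀ v : ℝ, HasDerivAt H hs v := fun v => by
    simpa [hHdef] using ((hasDerivAt_id v).mul_const hs).const_add h₀
  have hHu : 0 < H u := lt_of_lt_of_le hm hge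
  have hLu : 0 < lam (Φ u) := hlam_pos
  -- The open set where everything is positive
  set S : Set ℝ := {v | 0 < H v ∧ 0 < lam (Φ v)} with hSdef
  have hScont : IsOpen S := by
    have h1 : Continuous H := by
      exact (continuous_const.add (continuous_id.mul continuous_const) : Continuous fun v : ℝ => h₀ + v * hs)
    have h2 : Continuous fun v => lam (Φ v) := by
      exact hlam1.continuous.comp
        (by exact (continuous_const.add (continuous_id.mul continuous_const) : Continuous fun v : ℝ => φ₀ + v * φs))
    exact (isOpen_lt continuous_const h1).inter (isOpen_lt continuous_const h2)
  have hSu : S ∈ nhds u := hScont.mem_nhds ⟨hHu, hLu⟩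
  -- first derivative
  set ω₁ : ℝ → ℝ := fun v => δ * (hs / H v)
      + δ * (deriv lam (Φ v) * φs / lam (Φ v)) - lam (Φ v) * φs with hω₁def
  have hωeq : ω = fun v => δ * Real.log (H v) + δ * Real.log (lam (Φ v)) - Lam (Φ v) :=
    funext hω
  have hderiv1 : ∀ v ∈ S, HasDerivAt ω (ω₁ v) v := by
    intro v hv
    have hLv : HasDerivAt (fun w => lam (Φ w)) (deriv lam (Φ v) * φs) v :=
      (hlam1 (Φ v)).hasDerivAt.comp v (hΦd v)
    have t1 : HasDerivAt (fun w => δ * Real.log (H w)) (δ * (hs / H v)) v :=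
      ((hHd v).log (ne_of_gt hv.1)).const_mul δ
    have t2 : HasDerivAt (fun w => δ * Real.log (lam (Φ w)))
        (δ * (deriv lam (Φ v) * φs / lam (Φ v))) v :=
      (hLv.log (ne_of_gt hv.2)).const_mul δ
    have t3 : HasDerivAt (fun w => Lam (Φ w)) (lam (Φ v) * φs) v :=
      (hLam (Φ v)).comp v (hΦd v)
    rw [hωeq]
    exact (t1.add t2).sub t3
  have hEq : deriv ω =ᶠ[nhds u] ω₁ :=
    Filter.eventuallyEq_of_mem hSu (fun v hv => (hderiv1 v hv).deriv)
  have hkey : deriv (deriv ω) u = deriv ω₁ u := hEq.deriv_eq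
  -- second derivative at u
  have hNd : HasDerivAt (fun w => deriv lam (Φ w) * φs)
      (deriv (deriv lam) (Φ u) * φs * φs) u :=
    ((hlam2 (Φ u)).hasDerivAt.comp u (hΦd u)).mul_const φs
  have hLd : HasDerivAt (fun w => lam (Φ w)) (deriv lam (Φ u) * φs) u :=
    (hlam1 (Φ u)).hasDerivAt.comp u (hΦd u)
  have s1 : HasDerivAt (fun w => δ * (hs / H w))
      (δ * ((0 * H u - hs * hs) / (H u) ^ 2)) u :=
    ((hasDerivAt_const u hs).div (hHd u) (ne_of_gt hHu)).const_mul δ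
  have s2 : HasDerivAt (fun w => δ * (deriv lam (Φ w) * φs / lam (Φ w)))
      (δ * ((deriv (deriv lam) (Φ u) * φs * φs * lam (Φ u)
        - deriv lam (Φ u) * φs * (deriv lam (Φ u) * φs)) / (lam (Φ u)) ^ 2)) u :=
    (hNd.div hLd (ne_of_gt hLu)).const_mul δ
  have s3 : HasDerivAt (fun w => lam (Φ w) * φs) (deriv lam (Φ u) * φs * φs) u :=
    hLd.mul_const φs
  have hω₁d : HasDerivAt ω₁
      (δ * ((0 * H u - hs * hs) / (H u) ^ 2)
        + δ * ((deriv (deriv lam) (Φ u) * φs * φs * lam (Φ u)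
          - deriv lam (Φ u) * φs * (deriv lam (Φ u) * φs)) / (lam (Φ u)) ^ 2)
        - deriv lam (Φ u) * φs * φs) u := (s1.add s2).sub s3
  rw [hkey, hω₁d.deriv]
  -- now the arithmetic bound
  set L := lam (Φ u) with hLdef
  set L' := deriv lam (Φ u) with hL'def
  set L'' := deriv (deriv lam) (Φ u) with hL''def
  -- piece 1
  have p1 : -(δ * hs ^ 2 / m ^ 2) ≤ δ * ((0 * H u - hs * hs) / (H u) ^ 2) := by
    have hq : hs ^ 2 / (H u) ^ 2 ≤ hs ^ 2 / m ^ 2 := by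
      apply div_le_div_of_nonneg_left (sq_nonneg hs) (by positivity)
      exact pow_le_pow_left₀ (le_of_lt hm) hge 2
    have h2 : δ * (hs ^ 2 / (H u) ^ 2) ≤ δ * (hs ^ 2 / m ^ 2) :=
      mul_le_mul_of_nonneg_left hq hδ0
    have e1 : δ * ((0 * H u - hs * hs) / (H u) ^ 2) = -(δ * (hs ^ 2 / (H u) ^ 2)) := by ring
    have e2 : -(δ * hs ^ 2 / m ^ 2) = -(δ * (hs ^ 2 / m ^ 2)) := by ring
    rw [e1, e2]
    linarith
  -- piece 2
  have p2 : -(A * φs ^ 2) ≤ δ * ((L'' * φs * φs * L - L' * φs * (L' * φs)) / L ^ 2) := by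
    have hD : -(A * φs ^ 2) ≤ (L'' * φs * φs * L - L' * φs * (L' * φs)) / L ^ 2 := by
      rw [le_div_iff₀ (by positivity)]
      nlinarith [hlow, sq_nonneg φs, sq_nonneg L, mul_nonneg hA (sq_nonneg φs),
        mul_nonneg (mul_nonneg hA (sq_nonneg φs)) (sq_nonneg L)]
    have h1 : δ * (-(A * φs ^ 2)) ≤ δ * ((L'' * φs * φs * L - L' * φs * (L' * φs)) / L ^ 2) :=
      mul_le_mul_of_nonneg_left hD hδ0
    nlinarith [mul_nonneg hA (sq_nonneg φs)]
  -- piece 3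
  have p3 : -(B * φs ^ 2) ≤ -(L' * φs * φs) := by nlinarith [sq_nonneg φs]
  linarith [p1, p2, p3]
end

section
/- Let λ : ℝ → ℝ be twice differentiable with λ > 0, let Λ : ℝ → ℝ be differentiable with Λ′ = λ, and fix δ ∈ {0,1}, reals h₀, h₁, φ₀, φ₁, and constants 0 < m ≤ M, 0 < c₂ ≤ B, A ≥ 0. Let J be the closed interval with endpoints φ₀ and φ₁, and assume: m ≤ h₀ ≤ M and m ≤ h₁ ≤ M; and for every ψ ∈ J, λ(ψ)·λ″(ψ) ≤ λ′(ψ)², λ(ψ)·λ″(ψ) − λ′(ψ)² ≥ −A·λ(ψ)², and c₂ ≤ λ′(ψ) ≤ B. Define ω(u) = δ·log(h₀ + u·(h₁−h₀)) + δ·log λ(φ₀ + u·(φ₁−φ₀)) − Λ(φ₀ + u·(φ₁−φ₀)) for u ∈ [0,1]. Then −(1/2)·( δ·(h₁−h₀)²/m² + (A+B)·(φ₁−φ₀)² ) ≤ ω(1) − ω(0) − ω′(0) ≤ −(1/2)·( δ·(h₁−h₀)²/M² + c₂·(φ₁−φ₀)² ). -/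
lemma taylor2_aux (f f' f'' : ℝ → ℝ)
    (h1 : ∀ u ∈ Set.Icc (0:ℝ) 1, HasDerivAt f (f' u) u)
    (h2 : ∀ u ∈ Set.Icc (0:ℝ) 1, HasDerivAt f' (f'' u) u) :
    ∃ ξ ∈ Set.Ioo (0:ℝ) 1, f 1 - f 0 - f' 0 = f'' ξ / 2 := by
  set K := f 1 - f 0 - f' 0 with hK
  set g : ℝ → ℝ := fun u => f 1 - f u - (1 - u) * f' u - K * (1 - u) ^ 2 with hg
  have hgc : ContinuousOn g (Set.Icc 0 1) := by
    apply ContinuousOn.sub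
    apply ContinuousOn.sub
    · exact continuousOn_const.sub (fun u hu => (h1 u hu).continuousAt.continuousWithinAt)
    · exact (continuousOn_const.sub continuousOn_id).mul
        (fun u hu => (h2 u hu).continuousAt.continuousWithinAt)
    · exact continuousOn_const.mul ((continuousOn_const.sub continuousOn_id).pow 2)
  have hg01 : g 0 = g 1 := by
    simp only [hg, hK]
    ring_nf
  have hder : ∀ u ∈ Set.Ioo (0:ℝ) 1,
      HasDerivAt g ((1 - u) * (2 * K - f'' u)) u := by
    intro u hu
    have hu' : u ∈ Set.Icc (0:ℝ) 1 := Set.mem_Icc.2 ⟨le_of_lt hu.1, le_of_lt hu.2⟩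
    have d1 : HasDerivAt (fun u : ℝ => (1 - u) * f' u)
        ((0 - 1) * f' u + (1 - u) * f'' u) u := by
      exact (((hasDerivAt_const u (1:ℝ)).sub (hasDerivAt_id u) : HasDerivAt (fun u : ℝ => 1 - u) (0 - 1) u)).mul (h2 u hu')
    have d2 : HasDerivAt (fun u : ℝ => K * (1 - u) ^ 2)
        (K * (2 * (1 - u) * (-1))) u := by
      have : HasDerivAt (fun u : ℝ => (1 - u) ^ 2) (2 * (1 - u) ^ 1 * (0 - 1)) u :=
        ((hasDerivAt_const u (1:ℝ)).sub (hasDerivAt_id u)).pow 2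
      simpa [mul_comm, mul_assoc, mul_left_comm] using this.const_mul K
    have := (((hasDerivAt_const u (f 1)).sub (h1 u hu')).sub d1).sub d2
    exact this.congr_deriv (by ring)
  obtain ⟨ξ, hξ, hz⟩ := exists_hasDerivAt_eq_zero (by norm_num : (0:ℝ) < 1) hgc hg01 hder
  refine ⟨ξ, hξ, ?_⟩
  have h1ξ : (1 : ℝ) - ξ ≠ 0 := by have := hξ.2; intro h; linarith [hξ.2]
  have : 2 * K - f'' ξ = 0 := by
    rcases mul_eq_zero.1 hz with h | h
    · exact absurd h h1ξ
    · exact h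
  linarith

set_option maxHeartbeats 1000000 in
/-- Two-sided quadratic expansion of the log-likelihood along line segments:
the deterministic core of Lemma 2 of "Deep partially linear transformation
model for right-censored survival data". -/
theorem taylor_expansion_loglik_segment
    (lam Lam : ℝ → ℝ)
    (hlam1 : Differentiable ℝ lam)
    (hlam2 : Differentiable ℝ (deriv lam))
    (hlam_pos : ∀ x, 0 < lam x)
    (hLam : ∀ x, HasDerivAt Lam (lam x) x)
    (δ : ℝ) (hδ : δ = 0 ∨ δ = 1)
    (h₀ h₁ φ₀ φ₁ m M c₂ B A : ℝ)
    (hm : 0 < m) (hmM : m ≤ M) (hc₂ : 0 < c₂) (hc₂B : c₂ ≤ B) (hA : 0 ≤ A)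
    (hh₀ : m ≤ h₀ ∧ h₀ ≤ M) (hh₁ : m ≤ h₁ ∧ h₁ ≤ M)
    (hψ : ∀ ψ ∈ Set.uIcc φ₀ φ₁,
        lam ψ * deriv (deriv lam) ψ ≤ (deriv lam ψ) ^ 2 ∧
        lam ψ * deriv (deriv lam) ψ - (deriv lam ψ) ^ 2 ≥ -A * (lam ψ) ^ 2 ∧
        c₂ ≤ deriv lam ψ ∧ deriv lam ψ ≤ B)
    (ω : ℝ → ℝ)
    (hω : ∀ u, ω u = δ * Real.log (h₀ + u * (h₁ - h₀))
        + δ * Real.log (lam (φ₀ + u * (φ₁ - φ₀))) - Lam (φ₀ + u * (φ₁ - φ₀))) :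
    -(1 / 2) * (δ * (h₁ - h₀) ^ 2 / m ^ 2 + (A + B) * (φ₁ - φ₀) ^ 2)
        ≤ ω 1 - ω 0 - deriv ω 0 ∧
    ω 1 - ω 0 - deriv ω 0
        ≤ -(1 / 2) * (δ * (h₁ - h₀) ^ 2 / M ^ 2 + c₂ * (φ₁ - φ₀) ^ 2) := by
  have hωfun : ω = fun u => δ * Real.log (h₀ + u * (h₁ - h₀))
      + δ * Real.log (lam (φ₀ + u * (φ₁ - φ₀))) - Lam (φ₀ + u * (φ₁ - φ₀)) :=
    funext hω
  -- segment bounds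
  have hmem : ∀ u ∈ Set.Icc (0:ℝ) 1,
      m ≤ h₀ + u * (h₁ - h₀) ∧ h₀ + u * (h₁ - h₀) ≤ M := by
    intro u hu
    obtain ⟨hu0, hu1⟩ := hu
    constructor <;> nlinarith [hh₀.1, hh₀.2, hh₁.1, hh₁.2]
  have hφmem : ∀ u ∈ Set.Icc (0:ℝ) 1, φ₀ + u * (φ₁ - φ₀) ∈ Set.uIcc φ₀ φ₁ := by
    intro u hu
    obtain ⟨hu0, hu1⟩ := hu
    rw [Set.mem_uIcc]
    rcases le_total φ₀ φ₁ with h | h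
    · left; constructor <;> nlinarith
    · right; constructor <;> nlinarith
  -- first derivative
  set w1 : ℝ → ℝ := fun u =>
      δ * ((h₀ + u * (h₁ - h₀))⁻¹ * (h₁ - h₀))
      + δ * ((lam (φ₀ + u * (φ₁ - φ₀)))⁻¹
          * (deriv lam (φ₀ + u * (φ₁ - φ₀)) * (φ₁ - φ₀)))
      - lam (φ₀ + u * (φ₁ - φ₀)) * (φ₁ - φ₀) with hw1
  set w2 : ℝ → ℝ := fun u =>
      δ * (-(h₁ - h₀) ^ 2 / (h₀ + u * (h₁ - h₀)) ^ 2)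
      + δ * ((lam (φ₀ + u * (φ₁ - φ₀)) * deriv (deriv lam) (φ₀ + u * (φ₁ - φ₀))
              - (deriv lam (φ₀ + u * (φ₁ - φ₀))) ^ 2)
            / (lam (φ₀ + u * (φ₁ - φ₀))) ^ 2 * (φ₁ - φ₀) ^ 2)
      - deriv lam (φ₀ + u * (φ₁ - φ₀)) * (φ₁ - φ₀) ^ 2 with hw2
  have hφd : ∀ u : ℝ, HasDerivAt (fun u => φ₀ + u * (φ₁ - φ₀)) (φ₁ - φ₀) u :=
    fun u => (hasDerivAt_mul_const (φ₁ - φ₀)).const_add φ₀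
  have hhd : ∀ u : ℝ, HasDerivAt (fun u => h₀ + u * (h₁ - h₀)) (h₁ - h₀) u :=
    fun u => (hasDerivAt_mul_const (h₁ - h₀)).const_add h₀
  have hder1 : ∀ u ∈ Set.Icc (0:ℝ) 1, HasDerivAt ω (w1 u) u := by
    intro u hu
    have hne : h₀ + u * (h₁ - h₀) ≠ 0 := ne_of_gt (lt_of_lt_of_le hm (hmem u hu).1)
    have hlne : lam (φ₀ + u * (φ₁ - φ₀)) ≠ 0 := ne_of_gt (hlam_pos _)
    have t1 : HasDerivAt (fun u : ℝ => δ * Real.log (h₀ + u * (h₁ - h₀)))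
        (δ * ((h₀ + u * (h₁ - h₀))⁻¹ * (h₁ - h₀))) u :=
      (HasDerivAt.comp (h₂ := Real.log) u (Real.hasDerivAt_log hne) (hhd u)).const_mul δ
    have lc : HasDerivAt (fun u : ℝ => lam (φ₀ + u * (φ₁ - φ₀)))
        (deriv lam (φ₀ + u * (φ₁ - φ₀)) * (φ₁ - φ₀)) u :=
      ((hlam1 _).hasDerivAt).comp u (hφd u)
    have t2 : HasDerivAt (fun u : ℝ => δ * Real.log (lam (φ₀ + u * (φ₁ - φ₀))))
        (δ * ((lam (φ₀ + u * (φ₁ - φ₀)))⁻¹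
            * (deriv lam (φ₀ + u * (φ₁ - φ₀)) * (φ₁ - φ₀)))) u :=
      (HasDerivAt.comp (h₂ := Real.log) u (Real.hasDerivAt_log hlne) lc).const_mul δ
    have t3 : HasDerivAt (fun u : ℝ => Lam (φ₀ + u * (φ₁ - φ₀)))
        (lam (φ₀ + u * (φ₁ - φ₀)) * (φ₁ - φ₀)) u :=
      (hLam _).comp u (hφd u)
    rw [hωfun]
    exact (t1.add t2).sub t3
  have hder2 : ∀ u ∈ Set.Icc (0:ℝ) 1, HasDerivAt w1 (w2 u) u := by
    intro u hu
    have hpos : 0 < h₀ + u * (h₁ - h₀) := lt_of_lt_of_le hm (hmem u hu).1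
    have hne : h₀ + u * (h₁ - h₀) ≠ 0 := ne_of_gt hpos
    have hlpos : 0 < lam (φ₀ + u * (φ₁ - φ₀)) := hlam_pos _
    have hlne : lam (φ₀ + u * (φ₁ - φ₀)) ≠ 0 := ne_of_gt hlpos
    have lc : HasDerivAt (fun u : ℝ => lam (φ₀ + u * (φ₁ - φ₀)))
        (deriv lam (φ₀ + u * (φ₁ - φ₀)) * (φ₁ - φ₀)) u :=
      ((hlam1 _).hasDerivAt).comp u (hφd u)
    have t1 : HasDerivAt (fun u : ℝ => δ * ((h₀ + u * (h₁ - h₀))⁻¹ * (h₁ - h₀)))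
        (δ * ((-(h₁ - h₀) / (h₀ + u * (h₁ - h₀)) ^ 2) * (h₁ - h₀))) u :=
      (((hhd u).inv hne).mul_const (h₁ - h₀)).const_mul δ
    have a : HasDerivAt (fun u : ℝ => (lam (φ₀ + u * (φ₁ - φ₀)))⁻¹)
        (-(deriv lam (φ₀ + u * (φ₁ - φ₀)) * (φ₁ - φ₀))
          / (lam (φ₀ + u * (φ₁ - φ₀))) ^ 2) u := lc.inv hlne
    have b : HasDerivAt (fun u : ℝ => deriv lam (φ₀ + u * (φ₁ - φ₀)) * (φ₁ - φ₀))
        (deriv (deriv lam) (φ₀ + u * (φ₁ - φ₀)) * (φ₁ - φ₀) * (φ₁ - φ₀)) u :=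
      (((hlam2 _).hasDerivAt).comp u (hφd u)).mul_const (φ₁ - φ₀)
    have t2 := (a.mul b).const_mul δ
    have t3 : HasDerivAt (fun u : ℝ => lam (φ₀ + u * (φ₁ - φ₀)) * (φ₁ - φ₀))
        (deriv lam (φ₀ + u * (φ₁ - φ₀)) * (φ₁ - φ₀) * (φ₁ - φ₀)) u :=
      lc.mul_const (φ₁ - φ₀)
    have htot := (t1.add t2).sub t3
    rw [hw1]
    refine htot.congr_deriv ?_
    rw [hw2]
    field_simp
    ring
  obtain ⟨ξ, hξ, heq⟩ := taylor2_aux ω w1 w2 hder1 hder2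
  have hd0 : deriv ω 0 = w1 0 :=
    (hder1 0 (Set.mem_Icc.2 ⟨le_refl 0, zero_le_one⟩)).deriv
  rw [hd0]
  rw [heq]
  clear hder1 hder2 hωfun hω heq hd0
  -- now bound w2 ξ
  have hξI : ξ ∈ Set.Icc (0:ℝ) 1 := Set.mem_Icc.2 ⟨le_of_lt hξ.1, le_of_lt hξ.2⟩
  obtain ⟨hl, hu⟩ := hmem ξ hξI
  obtain ⟨hc1, hc2', hc3, hc4⟩ := hψ _ (hφmem ξ hξI)
  set p := φ₀ + ξ * (φ₁ - φ₀)
  set hh := h₀ + ξ * (h₁ - h₀)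
  have hlpos : 0 < lam p := hlam_pos p
  have hl2 : 0 < (lam p) ^ 2 := pow_pos hlpos 2
  have hhpos : 0 < hh := lt_of_lt_of_le hm hl
  have hm2 : 0 < m ^ 2 := pow_pos hm 2
  have hM2 : 0 < M ^ 2 := pow_pos (lt_of_lt_of_le hm hmM) 2
  have hhh2 : m ^ 2 ≤ hh ^ 2 := pow_le_pow_left₀ hm.le hl 2
  have hhh2' : hh ^ 2 ≤ M ^ 2 := pow_le_pow_left₀ hhpos.le hu 2
  have hhh2p : 0 < hh ^ 2 := pow_pos hhpos 2
  -- bounds on the h-term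
  have e1a : -((h₁ - h₀) ^ 2 / m ^ 2) ≤ -((h₁ - h₀) ^ 2 / hh ^ 2) := by
    apply neg_le_neg
    rw [div_le_div_iff₀ hhh2p hm2]
    nlinarith [sq_nonneg (h₁ - h₀)]
  have e1b : -((h₁ - h₀) ^ 2 / hh ^ 2) ≤ -((h₁ - h₀) ^ 2 / M ^ 2) := by
    apply neg_le_neg
    rw [div_le_div_iff₀ hM2 hhh2p]
    nlinarith [sq_nonneg (h₁ - h₀)]
  -- bounds on the middle term
  have e2a : -A ≤ (lam p * deriv (deriv lam) p - (deriv lam p) ^ 2) / (lam p) ^ 2 := by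
    rw [le_div_iff₀ hl2]
    nlinarith
  have e2b : (lam p * deriv (deriv lam) p - (deriv lam p) ^ 2) / (lam p) ^ 2 ≤ 0 := by
    apply div_nonpos_of_nonpos_of_nonneg
    · linarith
    · exact le_of_lt hl2
  have hφ2 : (0:ℝ) ≤ (φ₁ - φ₀) ^ 2 := sq_nonneg _
  have m3 : deriv lam p * (φ₁ - φ₀) ^ 2 ≤ B * (φ₁ - φ₀) ^ 2 :=
    mul_le_mul_of_nonneg_right hc4 hφ2
  have m4 : c₂ * (φ₁ - φ₀) ^ 2 ≤ deriv lam p * (φ₁ - φ₀) ^ 2 :=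
    mul_le_mul_of_nonneg_right hc3 hφ2
  have m5 : (0:ℝ) ≤ A * (φ₁ - φ₀) ^ 2 := mul_nonneg hA hφ2
  rcases hδ with h | h <;> subst h
  · constructor
    · have : w2 ξ = -deriv lam p * (φ₁ - φ₀) ^ 2 := by rw [hw2]; ring
      rw [this]
      norm_num
      linarith [m3, m4, m5]
    · have : w2 ξ = -deriv lam p * (φ₁ - φ₀) ^ 2 := by rw [hw2]; ring
      rw [this]
      norm_num
      linarith [m3, m4, m5]
  · have hw2v : w2 ξ = -((h₁ - h₀) ^ 2 / hh ^ 2)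
        + (lam p * deriv (deriv lam) p - (deriv lam p) ^ 2) / (lam p) ^ 2 * (φ₁ - φ₀) ^ 2
        - deriv lam p * (φ₁ - φ₀) ^ 2 := by
      rw [hw2]; ring
    constructor
    · rw [hw2v, one_mul]
      have m1 : -A * (φ₁ - φ₀) ^ 2
          ≤ (lam p * deriv (deriv lam) p - (deriv lam p) ^ 2) / (lam p) ^ 2 * (φ₁ - φ₀) ^ 2 :=
        mul_le_mul_of_nonneg_right e2a hφ2
      linarith [e1a, m1, m3]
    · rw [hw2v, one_mul]
      have m2 : (lam p * deriv (deriv lam) p - (deriv lam p) ^ 2) / (lam p) ^ 2 * (φ₁ - φ₀) ^ 2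
          ≤ 0 := mul_nonpos_of_nonpos_of_nonneg e2b hφ2
      linarith [e1b, m2, m4]
end

section
/- For all constants C₁ > 0 and C₂ > 0 there exist a constant C > 0 and N ∈ ℕ such that for every natural number n ≥ N and all real numbers θ, δ, s, L satisfying n^{−1/2} ≤ θ ≤ 1, δ > 0, δ·(log n)² ≤ θ, 1 ≤ s ≤ C₁·n·δ²·log n, L ≥ e, and log L ≤ C₂·(log n)², one has θ·√(s·log(L/θ)) + (s/√n)·log(L/θ) ≤ C·√n·θ². -/
/-- Display (A16) in the proof of Theorem 1 of "Deep partially linear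
transformation model for right-censored survival data": the modulus of
continuity bound θ·√(s·log(L/θ)) + (s/√n)·log(L/θ) ≤ C·√n·θ². -/
theorem modulus_of_continuity_rate_bound :
    ∀ C₁ C₂ : ℝ, 0 < C₁ → 0 < C₂ →
      ∃ C : ℝ, 0 < C ∧ ∃ N : ℕ, ∀ n : ℕ, N ≤ n →
        ∀ θ δ s L : ℝ,
          1 / Real.sqrt n ≤ θ → θ ≤ 1 →
          0 < δ → δ * (Real.log n) ^ 2 ≤ θ →
          1 ≤ s → s ≤ C₁ * n * δ ^ 2 * Real.log n →
          Real.exp 1 ≤ L → Real.log L ≤ C₂ * (Real.log n) ^ 2 →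
          θ * Real.sqrt (s * Real.log (L / θ))
              + (s / Real.sqrt n) * Real.log (L / θ)
            ≤ C * Real.sqrt n * θ ^ 2 := by
  intro C₁ C₂ hC₁ hC₂
  refine ⟨Real.sqrt (C₁ * (C₂ + 1)) + C₁ * (C₂ + 1), by positivity, 3, ?_⟩
  intro n hn θ δ s L hθl hθu hδ hδθ hs1 hsu hL hlogL
  have hn3 : (3 : ℝ) ≤ n := by exact_mod_cast hn
  have hn0 : (0 : ℝ) < n := by linarith
  set ln := Real.log n with hlndef
  set sn := Real.sqrt n with hsndef
  have hsn0 : 0 < sn := Real.sqrt_pos.mpr hn0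
  have hsnsq : sn ^ 2 = n := Real.sq_sqrt hn0.le
  have hln1 : (1 : ℝ) ≤ ln := by
    rw [hlndef, Real.le_log_iff_exp_le hn0]
    have := Real.exp_one_lt_d9
    linarith
  have hθ0 : 0 < θ := lt_of_lt_of_le (by positivity) hθl
  have hL0 : 0 < L := lt_of_lt_of_le (Real.exp_pos 1) hL
  -- lower bound on log θ
  have hlogθ : -(ln / 2) ≤ Real.log θ := by
    have h1 : Real.log (1 / sn) ≤ Real.log θ :=
      Real.log_le_log (by positivity) hθl
    have h2 : Real.log (1 / sn) = -(ln / 2) := by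
      rw [one_div, Real.log_inv, hsndef, Real.log_sqrt hn0.le]
    linarith
  -- log(L/θ) bounds
  have hlogdiv : Real.log (L / θ) = Real.log L - Real.log θ :=
    Real.log_div (ne_of_gt hL0) (ne_of_gt hθ0)
  have hlogub : Real.log (L / θ) ≤ (C₂ + 1) * ln ^ 2 := by
    have h : ln / 2 ≤ ln ^ 2 := by nlinarith
    rw [hlogdiv]; linarith
  have hlognn : 0 ≤ Real.log (L / θ) := by
    apply Real.log_nonneg
    rw [le_div_iff₀ hθ0]
    have : (1 : ℝ) ≤ L := le_trans (by nlinarith [Real.exp_one_lt_d9, Real.exp_one_gt_d9]) hL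
    nlinarith
  -- sparsity bound: s * ln^3 ≤ C₁ * n * θ^2
  have hsθ : s * ln ^ 3 ≤ C₁ * n * θ ^ 2 := by
    have h1 : (δ * ln ^ 2) ^ 2 ≤ θ ^ 2 := by
      have h0 : 0 ≤ δ * ln ^ 2 := by positivity
      nlinarith
    have h2 : s * ln ^ 3 ≤ C₁ * n * δ ^ 2 * ln * ln ^ 3 :=
      mul_le_mul_of_nonneg_right hsu (by positivity)
    have h3 : C₁ * n * (δ * ln ^ 2) ^ 2 ≤ C₁ * n * θ ^ 2 :=
      mul_le_mul_of_nonneg_left h1 (by positivity)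
    calc s * ln ^ 3 ≤ C₁ * n * δ ^ 2 * ln * ln ^ 3 := h2
      _ = C₁ * n * (δ * ln ^ 2) ^ 2 := by ring
      _ ≤ C₁ * n * θ ^ 2 := h3
  -- key bound: s * log(L/θ) ≤ C₁(C₂+1) n θ²
  have hkey : s * Real.log (L / θ) ≤ C₁ * (C₂ + 1) * (sn * θ) ^ 2 := by
    have hs0 : (0:ℝ) < s := lt_of_lt_of_le one_pos hs1
    have h3 : s * Real.log (L / θ) ≤ s * ((C₂ + 1) * ln ^ 2) :=
      mul_le_mul_of_nonneg_left hlogub hs0.le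
    have h4 : s * ln ^ 2 ≤ s * ln ^ 3 := by
      have h4' : s * ln ^ 2 * 1 ≤ s * ln ^ 2 * ln :=
        mul_le_mul_of_nonneg_left hln1 (by positivity)
      calc s * ln ^ 2 = s * ln ^ 2 * 1 := (mul_one _).symm
        _ ≤ s * ln ^ 2 * ln := h4'
        _ = s * ln ^ 3 := by ring
    have h5 : (sn * θ) ^ 2 = n * θ ^ 2 := by rw [mul_pow, hsnsq]
    calc s * Real.log (L / θ) ≤ s * ((C₂ + 1) * ln ^ 2) := h3
      _ = (C₂ + 1) * (s * ln ^ 2) := by ring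
      _ ≤ (C₂ + 1) * (s * ln ^ 3) := mul_le_mul_of_nonneg_left h4 (by positivity)
      _ ≤ (C₂ + 1) * (C₁ * n * θ ^ 2) := mul_le_mul_of_nonneg_left hsθ (by positivity)
      _ = C₁ * (C₂ + 1) * (sn * θ) ^ 2 := by rw [h5]; ring
  -- term 1
  have hterm1 : θ * Real.sqrt (s * Real.log (L / θ))
      ≤ Real.sqrt (C₁ * (C₂ + 1)) * sn * θ ^ 2 := by
    have h6 : Real.sqrt (s * Real.log (L / θ))
        ≤ Real.sqrt (C₁ * (C₂ + 1)) * (sn * θ) := by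
      have heq : Real.sqrt (C₁ * (C₂ + 1) * (sn * θ) ^ 2)
          = Real.sqrt (C₁ * (C₂ + 1)) * (sn * θ) := by
        rw [Real.sqrt_mul (by positivity : (0:ℝ) ≤ C₁ * (C₂ + 1)),
          Real.sqrt_sq (by positivity : (0:ℝ) ≤ sn * θ)]
      exact heq ▸ Real.sqrt_le_sqrt hkey
    calc θ * Real.sqrt (s * Real.log (L / θ))
        ≤ θ * (Real.sqrt (C₁ * (C₂ + 1)) * (sn * θ)) :=
          mul_le_mul_of_nonneg_left h6 hθ0.le
      _ = Real.sqrt (C₁ * (C₂ + 1)) * sn * θ ^ 2 := by ring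
  -- term 2
  have hterm2 : (s / sn) * Real.log (L / θ) ≤ C₁ * (C₂ + 1) * sn * θ ^ 2 := by
    rw [div_mul_eq_mul_div, div_le_iff₀ hsn0]
    calc s * Real.log (L / θ) ≤ C₁ * (C₂ + 1) * (sn * θ) ^ 2 := hkey
      _ = C₁ * (C₂ + 1) * sn * θ ^ 2 * sn := by rw [mul_pow, sq]; ring
  calc θ * Real.sqrt (s * Real.log (L / θ)) + (s / sn) * Real.log (L / θ)
      ≤ Real.sqrt (C₁ * (C₂ + 1)) * sn * θ ^ 2 + C₁ * (C₂ + 1) * sn * θ ^ 2 := by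
        linarith
    _ = (Real.sqrt (C₁ * (C₂ + 1)) + C₁ * (C₂ + 1)) * sn * θ ^ 2 := by ring
end
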